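/- The plane can be properly 7-colored avoiding distance 1: there exists a function c : ℝ² → Fin 7 such that whenever two points have Euclidean distance exactly 1, they receive different colors. Consequently the chromatic number of the unit-distance graph on ℝ² is at most 7. -/

import Mathlib

set_option maxHeartbeats 1000000

noncomputable def sq3 : ℝ := Real.sqrt 3
noncomputable def alc (p q : ℝ) : ℝ := 4/3*p - 4/9*sq3*q
noncomputable def bec (p q : ℝ) : ℝ := 8/9*sq3*q

/-- nearest hexagonal-lattice corner (lattice spacing 3/4), in lattice coordinates -/
noncomputable def ctr (p q : ℝ) : ℤ × ℤ :=
  if Int.fract (alc p q) + Int.fract (bec p q) ≤ 1 then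
    if 2*Int.fract (alc p q) + Int.fract (bec p q) ≤ 1 ∧
       Int.fract (alc p q) + 2*Int.fract (bec p q) ≤ 1 then (⌊alc p q⌋, ⌊bec p q⌋)
    else if Int.fract (bec p q) ≤ Int.fract (alc p q) then (⌊alc p q⌋+1, ⌊bec p q⌋)
    else (⌊alc p q⌋, ⌊bec p q⌋+1)
  else
    if 2 ≤ 2*Int.fract (alc p q) + Int.fract (bec p q) ∧
       2 ≤ Int.fract (alc p q) + 2*Int.fract (bec p q) then (⌊alc p q⌋+1, ⌊bec p q⌋+1)
    else if Int.fract (bec p q) ≤ Int.fract (alc p q) then (⌊alc p q⌋+1, ⌊bec p q⌋)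
    else (⌊alc p q⌋, ⌊bec p q⌋+1)

lemma sq3_sq : sq3^2 = 3 := Real.sq_sqrt (by norm_num)
lemma sq3_nonneg : 0 ≤ sq3 := Real.sqrt_nonneg 3

lemma ctr_close (p q : ℝ) :
    (p - (3/4*((ctr p q).1 : ℝ) + 3/8*((ctr p q).2 : ℝ)))^2
      + (q - 3/8*sq3*((ctr p q).2 : ℝ))^2 ≤ 3/16 := by
  have hs := sq3_sq
  set α := alc p q with hα
  set β := bec p q with hβ
  have hp : p = 3/4*α + 3/8*β := by rw [hα, hβ]; unfold alc bec; ring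
  have hq : q = 3/8*sq3*β := by
    rw [hβ]; unfold bec; linear_combination (-(8:ℝ)/24*q) * hs
  set f := Int.fract α with hf
  set g := Int.fract β with hg
  have haf : (⌊α⌋ : ℝ) = α - f := by rw [hf, Int.self_sub_fract]
  have hbg : (⌊β⌋ : ℝ) = β - g := by rw [hg, Int.self_sub_fract]
  have hf0 : 0 ≤ f := Int.fract_nonneg α
  have hf1 : f < 1 := Int.fract_lt_one α
  have hg0 : 0 ≤ g := Int.fract_nonneg β
  have hg1 : g < 1 := Int.fract_lt_one β
  have key : ∀ F G : ℝ, F^2 + F*G + G^2 ≤ 1/3 →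
      (p - (3/4*(α - F) + 3/8*(β - G)))^2 + (q - 3/8*sq3*(β - G))^2 ≤ 3/16 := by
    intro F G hFG
    have e1 : p - (3/4*(α - F) + 3/8*(β - G)) = 3/4*F + 3/8*G := by rw [hp]; ring
    have e2 : (q - 3/8*sq3*(β - G))^2 = 27/64*G^2 := by
      rw [hq]; linear_combination ((9:ℝ)/64*G^2) * hs
    rw [e1, e2]; nlinarith [hFG]
  unfold ctr
  rw [← hα, ← hβ, ← hf, ← hg]
  split_ifs with h1 h2 h3 h4 h5 <;>
    simp only [Int.cast_add, Int.cast_one, haf, hbg]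
  · -- corner (0,0)
    have := key f g (by nlinarith [mul_nonneg (show (0:ℝ) ≤ 1-2*f-g by linarith [h2.1]) (show (0:ℝ) ≤ 2*f+g by linarith), mul_nonneg (show (0:ℝ) ≤ 1-f-2*g by linarith [h2.2]) (show (0:ℝ) ≤ f+2*g by linarith), mul_nonneg (show (0:ℝ) ≤ 1-2*f-g by linarith [h2.1]) (show (0:ℝ) ≤ 1-f-2*g by linarith [h2.2])])
    exact this
  · -- corner (1,0), lower triangle
    have h2f : 1 ≤ 2*f + g := by
      by_contra hcon; push_neg at hcon; exact h2 ⟨by linarith, by linarith⟩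
    have := key (f-1) g (by nlinarith [mul_nonneg (show (0:ℝ) ≤ 2*f+g-1 by linarith) (show (0:ℝ) ≤ 1-f-g by linarith), mul_nonneg (show (0:ℝ) ≤ f-g by linarith) hg0, mul_nonneg (show (0:ℝ) ≤ 2*f+g-1 by linarith) (show (0:ℝ) ≤ f-g by linarith), mul_nonneg hg0 (show (0:ℝ) ≤ 1-f-g by linarith), sq_nonneg (f-1+g), sq_nonneg (f-g-1)])
    exact le_trans (le_of_eq (by ring)) this
  · -- corner (0,1), lower triangle
    have h2g : 1 ≤ f + 2*g := by
      by_contra hcon; push_neg at hcon; exact h2 ⟨by linarith, by linarith⟩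
    have := key f (g-1) (by nlinarith [mul_nonneg (show (0:ℝ) ≤ f+2*g-1 by linarith) (show (0:ℝ) ≤ 1-f-g by linarith), mul_nonneg (show (0:ℝ) ≤ g-f by linarith) hf0, mul_nonneg (show (0:ℝ) ≤ f+2*g-1 by linarith) (show (0:ℝ) ≤ g-f by linarith), mul_nonneg hf0 (show (0:ℝ) ≤ 1-f-g by linarith), sq_nonneg (f+g-1), sq_nonneg (g-f-1)])
    exact le_trans (le_of_eq (by ring)) this
  · -- corner (1,1)
    have := key (f-1) (g-1) (by nlinarith [mul_nonneg (show (0:ℝ) ≤ 2*f+g-2 by linarith [h4.1]) (show (0:ℝ) ≤ 1-f by linarith), mul_nonneg (show (0:ℝ) ≤ f+2*g-2 by linarith [h4.2]) (show (0:ℝ) ≤ 1-g by linarith), mul_nonneg (show (0:ℝ) ≤ 2*f+g-2 by linarith [h4.1]) (show (0:ℝ) ≤ f+2*g-2 by linarith [h4.2]), mul_nonneg (show (0:ℝ) ≤ 1-f by linarith) (show (0:ℝ) ≤ 1-g by linarith)])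
    exact le_trans (le_of_eq (by ring)) this
  · -- corner (1,0), upper triangle
    have h2g : f + 2*g ≤ 2 := by
      rcases not_and_or.mp h4 with h | h <;> push_neg at h <;> linarith
    have := key (f-1) g (by nlinarith [mul_nonneg (show (0:ℝ) ≤ f+g-1 by linarith) (show (0:ℝ) ≤ 1-f by linarith), mul_nonneg (show (0:ℝ) ≤ f-g by linarith) (show (0:ℝ) ≤ 2-f-2*g by linarith), mul_nonneg (show (0:ℝ) ≤ f+g-1 by linarith) (show (0:ℝ) ≤ 2-f-2*g by linarith), mul_nonneg (show (0:ℝ) ≤ f-g by linarith) (show (0:ℝ) ≤ 1-f by linarith), sq_nonneg (f-1+g-1), sq_nonneg (f-g)])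
    exact le_trans (le_of_eq (by ring)) this
  · -- corner (0,1), upper triangle
    have h2f : 2*f + g ≤ 2 := by
      rcases not_and_or.mp h4 with h | h <;> push_neg at h <;> linarith
    have := key f (g-1) (by nlinarith [mul_nonneg (show (0:ℝ) ≤ f+g-1 by linarith) (show (0:ℝ) ≤ 1-g by linarith), mul_nonneg (show (0:ℝ) ≤ g-f by linarith) (show (0:ℝ) ≤ 2-2*f-g by linarith), mul_nonneg (show (0:ℝ) ≤ f+g-1 by linarith) (show (0:ℝ) ≤ 2-2*f-g by linarith), mul_nonneg (show (0:ℝ) ≤ g-f by linarith) (show (0:ℝ) ≤ 1-g by linarith), sq_nonneg (f-1+g-1), sq_nonneg (g-f)])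
    exact le_trans (le_of_eq (by ring)) this
lemma lattice_ge (i j : ℤ) (hd : (7:ℤ) ∣ i + 3*j) (hne : ¬(i = 0 ∧ j = 0)) :
    (7:ℤ) ≤ i^2 + i*j + j^2 := by
  obtain ⟨k, hk⟩ := hd
  have hQ : i^2 + i*j + j^2 = 7*(k*(i - 2*j) + j^2) := by linear_combination (i - 2*j) * hk
  have hpos : 0 < i^2 + i*j + j^2 := by
    rcases eq_or_ne j 0 with hj | hj
    · subst hj
      have hi : i ≠ 0 := by tauto
      have h2 : 0 < i^2 := lt_of_le_of_ne (sq_nonneg i) (Ne.symm (pow_ne_zero 2 hi))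
      nlinarith
    · have h2 : 0 < j^2 := lt_of_le_of_ne (sq_nonneg j) (Ne.symm (pow_ne_zero 2 hj))
      nlinarith [sq_nonneg (2*i + j)]
  rw [hQ] at hpos ⊢
  omega

noncomputable def colorFun (x : EuclideanSpace ℝ (Fin 2)) : Fin 7 :=
  (((ctr (x 0) (x 1)).1 + 3*(ctr (x 0) (x 1)).2 : ℤ) : ZMod 7)

noncomputable def zpt (A B : ℤ) : EuclideanSpace ℝ (Fin 2) :=
  (WithLp.equiv 2 (Fin 2 → ℝ)).symm ![3/4*(A:ℝ) + 3/8*(B:ℝ), 3/8*sq3*(B:ℝ)]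

lemma zpt_apply0 (A B : ℤ) : zpt A B 0 = 3/4*(A:ℝ) + 3/8*(B:ℝ) := rfl
lemma zpt_apply1 (A B : ℤ) : zpt A B 1 = 3/8*sq3*(B:ℝ) := rfl

lemma dist_sq_eq (x y : EuclideanSpace ℝ (Fin 2)) :
    dist x y ^ 2 = (x 0 - y 0)^2 + (x 1 - y 1)^2 := by
  rw [EuclideanSpace.dist_eq]
  rw [Real.sq_sqrt (by positivity)]
  simp [Fin.sum_univ_two, Real.dist_eq, sq_abs]

lemma dist_to_ctr (x : EuclideanSpace ℝ (Fin 2)) :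
    dist x (zpt (ctr (x 0) (x 1)).1 (ctr (x 0) (x 1)).2) ≤ sq3/4 := by
  have h := ctr_close (x 0) (x 1)
  have hd2 : dist x (zpt (ctr (x 0) (x 1)).1 (ctr (x 0) (x 1)).2) ^2 ≤ 3/16 := by
    rw [dist_sq_eq, zpt_apply0, zpt_apply1]; exact h
  have h0 : (0:ℝ) ≤ dist x (zpt (ctr (x 0) (x 1)).1 (ctr (x 0) (x 1)).2) := dist_nonneg
  nlinarith [sq3_sq, sq3_nonneg]

lemma no_unit (x y : EuclideanSpace ℝ (Fin 2)) (h1 : dist x y = 1) : colorFun x ≠ colorFun y := by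
  intro hc
  set A := (ctr (x 0) (x 1)).1 with hA
  set B := (ctr (x 0) (x 1)).2 with hB
  set C := (ctr (y 0) (y 1)).1 with hC
  set D := (ctr (y 0) (y 1)).2 with hD
  have hdvd : (7:ℤ) ∣ (C + 3*D) - (A + 3*B) := by
    have : ((A + 3*B : ℤ) : ZMod 7) = ((C + 3*D : ℤ) : ZMod 7) := hc
    exact ((ZMod.intCast_eq_intCast_iff _ _ _).mp this).dvd
  have hxz : dist x (zpt A B) ≤ sq3/4 := dist_to_ctr x
  have hyz : dist y (zpt C D) ≤ sq3/4 := dist_to_ctr y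
  have hs := sq3_sq
  have hsn := sq3_nonneg
  by_cases h0 : A = C ∧ B = D
  · -- same center: distance < 1
    obtain ⟨h01, h02⟩ := h0
    rw [h01, h02] at hxz
    have := dist_triangle x (zpt C D) y
    rw [dist_comm (zpt C D) y] at this
    nlinarith [sq_nonneg (sq3 - 2)]
  · -- different centers
    have hij : ¬((C - A) = 0 ∧ (D - B) = 0) := by
      intro ⟨u, v⟩; exact h0 ⟨by omega, by omega⟩
    have hge : (7:ℤ) ≤ (C-A)^2 + (C-A)*(D-B) + (D-B)^2 :=
      lattice_ge (C-A) (D-B) (by obtain ⟨k,hk⟩ := hdvd; exact ⟨k, by linarith⟩) hij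
    have hgeR : (63:ℝ)/16 ≤ dist (zpt A B) (zpt C D) ^ 2 := by
      rw [dist_sq_eq, zpt_apply0, zpt_apply1, zpt_apply0, zpt_apply1]
      have hgeR' : (7:ℝ) ≤ ((C:ℝ)-A)^2 + ((C:ℝ)-A)*((D:ℝ)-B) + ((D:ℝ)-B)^2 := by
        exact_mod_cast hge
      nlinarith
    have htri : dist (zpt A B) (zpt C D) ≤ sq3/4 + 1 + sq3/4 := by
      calc dist (zpt A B) (zpt C D) ≤ dist (zpt A B) x + dist x (zpt C D) := dist_triangle _ _ _
        _ ≤ dist (zpt A B) x + (dist x y + dist y (zpt C D)) := by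
              linarith [dist_triangle x y (zpt C D)]
        _ ≤ sq3/4 + 1 + sq3/4 := by rw [dist_comm (zpt A B) x]; linarith
    have hdn : (0:ℝ) ≤ dist (zpt A B) (zpt C D) := dist_nonneg
    have hsq : dist (zpt A B) (zpt C D) ^ 2 ≤ (sq3/4 + 1 + sq3/4)^2 :=
      pow_le_pow_left₀ hdn htri 2
    nlinarith [sq_nonneg (sq3 - 35/16)]


/-- The unit-distance graph on the Euclidean plane `ℝ²`. -/
def planeGraph : SimpleGraph (EuclideanSpace ℝ (Fin 2)) where
  Adj x y := dist x y = 1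
  symm := ⟨fun x y h => by show dist y x = 1; rw [dist_comm]; exact h⟩
  loopless := ⟨fun x h => by simp at h⟩

/-- The plane can be properly 7-colored avoiding distance 1; consequently the
chromatic number of the unit-distance graph on `ℝ²` is at most 7. -/
theorem plane_seven_coloring :
    (∃ c : EuclideanSpace ℝ (Fin 2) → Fin 7,
      ∀ x y : EuclideanSpace ℝ (Fin 2), dist x y = 1 → c x ≠ c y) ∧
    planeGraph.chromaticNumber ≤ 7 := by
  refine ⟨⟨colorFun, fun x y h => no_unit x y h⟩, ?_⟩
  have hcol : planeGraph.Colorable 7 :=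
    ⟨SimpleGraph.Coloring.mk colorFun (fun {u v} hadj => no_unit u v hadj)⟩
  exact hcol.chromaticNumber_le
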